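/- Let M be a minor-closed class of binary matroids, and let {Φ₁,…,Φ_s,Ψ₁,…,Ψ_t} be a set of binary frame templates describing M. If any of these templates is nontrivial, then M contains M(Φ_{Y₀}), M(Φ_{Y₁}), M*(Φ_{Y₀}), or M*(Φ_{Y₁}), where M(Φ) is the class of matroids conforming to Φ and M*(Φ) is the class of duals of matroids conforming to Φ. -/

import Mathlib

open Matroid Set

namespace TemplatePaper

variable {α β γ : Type*}

/-- Matroid isomorphism. -/
def MIso (M : Matroid α) (N : Matroid β) : Prop :=
  ∃ f : α → β, Set.BijOn f M.E N.E ∧ ∀ I ⊆ M.E, (M.Indep I ↔ N.Indep (f '' I))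

/-- `N` is the contraction `M ／ K`. -/
def IsContraction (N M : Matroid α) (K : Set α) : Prop :=
  N.E = M.E \ K ∧
    ∀ I : Set α, N.Indep I ↔
      (I ⊆ M.E \ K ∧ ∃ J, M.IsBasis J (K ∩ M.E) ∧ M.Indep (I ∪ J))

/-- `N` is a minor of `M` (obtained by a contraction followed by a deletion). -/
def MinorOf (N M : Matroid α) : Prop :=
  ∃ (N₁ : Matroid α) (K D : Set α), IsContraction N₁ M K ∧ N = N₁ ↾ (N₁.E \ D)

/-- `M` has a minor isomorphic to `P`. -/
def HasIsoMinor (M : Matroid α) (P : Matroid β) : Prop :=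
  ∃ N : Matroid α, MinorOf N M ∧ MIso P N

/-- A simple matroid: every subset of the ground set with at most two elements
is independent. -/
def IsSimple (M : Matroid α) : Prop :=
  ∀ I ⊆ M.E, I.ncard ≤ 2 → M.Indep I

/-- The rank of a set in a matroid (as a natural number; intended for finite matroids). -/
noncomputable def rkOf (M : Matroid α) (X : Set α) : ℕ :=
  sSup {n | ∃ I, I ⊆ X ∧ M.Indep I ∧ I.ncard = n}

/-- The rank of a matroid. -/
noncomputable def rk (M : Matroid α) : ℕ := rkOf M M.E

/-- A matroid is vertically `k`-connected if for every partition `(X, Y)` of the ground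
set with `r(X) + r(Y) - r(M) < k - 1`, either `X` or `Y` is spanning. -/
def VertConn (M : Matroid α) (k : ℕ) : Prop :=
  ∀ X Y : Set α, X ∪ Y = M.E → Disjoint X Y →
    (rkOf M X : ℤ) + (rkOf M Y : ℤ) - (rk M : ℤ) < (k : ℤ) - 1 →
    M.Spanning X ∨ M.Spanning Y

/-- `M` is represented (on its ground set) by the matrix `A` over `F`:
independence in `M` coincides with linear independence of the corresponding columns. -/
def IsRepBy (F : Type*) [Field F] (M : Matroid α) (A : β → α → F) : Prop :=
  ∀ I ⊆ M.E, (M.Indep I ↔ LinearIndependent F (fun e : I => fun b => A b (e : α)))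

/-- A binary matroid: a matroid representable over `GF(2)`. -/
def IsBinary (M : Matroid α) : Prop :=
  ∃ (m : ℕ) (A : Fin m → α → ZMod 2), IsRepBy (ZMod 2) M A

/-- A graphic matroid: the cycle matroid of a graph.  Equivalently (as is standard for
binary matroids, and as used in the paper), a matroid representable over `GF(2)` by a
matrix in which every column has at most two nonzero entries. -/
def IsGraphic (M : Matroid α) : Prop :=
  ∃ (m : ℕ) (A : Fin m → α → ZMod 2),
    IsRepBy (ZMod 2) M A ∧ ∀ e ∈ M.E, {i | A i e ≠ 0}.ncard ≤ 2

/-- A cographic matroid: the dual of a graphic matroid. -/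
def IsCographic (M : Matroid α) : Prop := IsGraphic M✶

/-- `G` is (isomorphic to) the binary projective geometry `PG(m-1, 2)`:
its ground set is in bijection with the nonzero vectors of `GF(2)^m`, with independence
given by linear independence. -/
def IsPG (m : ℕ) (G : Matroid γ) : Prop :=
  ∃ f : γ → (Fin m → ZMod 2),
    Set.BijOn f G.E {v | v ≠ 0} ∧
    ∀ I ⊆ G.E, (G.Indep I ↔ LinearIndependent (ZMod 2) (fun e : I => f (e : γ)))

/-- The set of sizes of simple rank-`≤ r` matroids in a class `𝓜`; the growth rate
function of `𝓜` at `r` is the greatest element of this set. -/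
def sizesOfRank (𝓜 : Set (Matroid ℕ)) (r : ℕ) : Set ℕ :=
  {n | ∃ M ∈ 𝓜, M.E.Finite ∧ IsSimple M ∧ rk M ≤ r ∧ M.E.ncard = n}

/-- The growth rate function of `𝓜` agrees with `f` for all but finitely many `r`. -/
def GrowthRateEventually (𝓜 : Set (Matroid ℕ)) (f : ℕ → ℕ) : Prop :=
  ∃ N : ℕ, ∀ r ≥ N, IsGreatest (sizesOfRank 𝓜 r) (f r)

/-- A minor-closed class of matroids (closed under minors and isomorphism). -/
def MinorClosed (𝓜 : Set (Matroid ℕ)) : Prop :=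
  (∀ M ∈ 𝓜, ∀ N : Matroid ℕ, MinorOf N M → N ∈ 𝓜) ∧
  (∀ M ∈ 𝓜, ∀ N : Matroid ℕ, MIso N M → N ∈ 𝓜)

/-- The class of binary matroids with no minor isomorphic to `P`. -/
def EX (P : Matroid β) : Set (Matroid ℕ) :=
  {M | M.E.Finite ∧ IsBinary M ∧ ¬HasIsoMinor M P}

/-- The subgroup of `F^ℕ` of all vectors supported on the finite set `S`
(used to encode subgroups of `F^S` for varying index sets `S`). -/
def fullOn (F : Type*) [Field F] (S : Finset ℕ) : AddSubgroup (ℕ → F) where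
  carrier := {v | ∀ i ∉ S, v i = 0}
  add_mem' := by
    intro a b ha hb i hi
    simp [Pi.add_apply, ha i hi, hb i hi]
  zero_mem' := by intro i _; rfl
  neg_mem' := by
    intro a ha i hi
    simp [Pi.neg_apply, ha i hi]

/-- Restriction of a vector to the coordinates in `S` (zero elsewhere); used to encode
the projection of a subgroup of `F^T` into `F^S`. -/
def maskOn {F : Type*} [Field F] (S : Finset ℕ) (v : ℕ → F) : ℕ → F :=
  fun i => if i ∈ S then v i else 0

/-- A frame template over `F`.  The disjoint finite sets `C, X, Y₀, Y₁` are encoded as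
disjoint finite subsets of `ℕ`; the matrix `A₁ ∈ F^{X × (C ∪ Y₀ ∪ Y₁)}` is encoded as a
function `ℕ → ℕ → F` supported on `X × (C ∪ Y₀ ∪ Y₁)`; the subgroups
`Λ ≤ F^X` and `Δ ≤ F^{C ∪ Y₀ ∪ Y₁}` are encoded as subgroups of `F^ℕ` of vectors
supported on the relevant sets, closed under scaling by elements of `Γ`. -/
structure FrameTemplate (F : Type) [Field F] where
  Γ : Subgroup Fˣ
  C : Finset ℕ
  X : Finset ℕ
  Y0 : Finset ℕ
  Y1 : Finset ℕ
  disj : List.Pairwise Disjoint [C, X, Y0, Y1]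
  A1 : ℕ → ℕ → F
  A1_supp : ∀ i j, A1 i j ≠ 0 → i ∈ X ∧ j ∈ C ∪ Y0 ∪ Y1
  Δ : AddSubgroup (ℕ → F)
  Δ_supp : ∀ v ∈ Δ, ∀ j ∉ C ∪ Y0 ∪ Y1, v j = 0
  Δ_smul : ∀ γ ∈ Γ, ∀ v ∈ Δ, (γ : F) • v ∈ Δ
  Λ : AddSubgroup (ℕ → F)
  Λ_supp : ∀ v ∈ Λ, ∀ i ∉ X, v i = 0
  Λ_smul : ∀ γ ∈ Γ, ∀ v ∈ Λ, (γ : F) • v ∈ Λ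

namespace FrameTemplate

variable {F : Type} [Field F]

/-- The column index set `C ∪ Y₀ ∪ Y₁` of `A₁`. -/
def CY (Φ : FrameTemplate F) : Finset ℕ := Φ.C ∪ Φ.Y0 ∪ Φ.Y1

end FrameTemplate

section Columns

variable {F : Type} [Field F]

/-- A column that is zero on the rows in `S`. -/
def IsZeroColOn (S : Set ℕ) (v : ℕ → F) : Prop := ∀ b ∈ S, v b = 0

/-- A unit column on the rows in `S`. -/
def IsUnitColOn (S : Set ℕ) (v : ℕ → F) : Prop :=
  ∃ b ∈ S, v b = 1 ∧ ∀ b' ∈ S, b' ≠ b → v b' = 0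

/-- A column of a `Γ`-frame matrix (restricted to the rows in `S`): at most two nonzero
entries, a nonzero column contains a `1`, and a second nonzero entry equals `-γ` for
some `γ ∈ Γ`. -/
def IsFrameColOn (Γ : Subgroup Fˣ) (S : Set ℕ) (v : ℕ → F) : Prop :=
  IsZeroColOn S v ∨ IsUnitColOn S v ∨
    ∃ b₁ ∈ S, ∃ b₂ ∈ S, b₁ ≠ b₂ ∧ v b₁ = 1 ∧ (∃ γ ∈ Γ, v b₂ = -(γ : F)) ∧
      ∀ b ∈ S, b ≠ b₁ → b ≠ b₂ → v b = 0

end Columns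

namespace FrameTemplate

variable {F : Type} [Field F]

/-- A matrix `A'` (with row set `B` and column set `E`, encoded as a function `ℕ → ℕ → F`
supported on `B × E`) respects the template `Φ`, with `Z ⊆ E` as the distinguished set of
columns, and with the columns of `A'[B - X, Z]` required to satisfy `zcol`.
Taking `zcol` to be "unit column" gives `Respects`; allowing zero columns as well gives
`VRespects` (virtually respects). -/
def RespectsWith (zcol : Set ℕ → (ℕ → F) → Prop) (Φ : FrameTemplate F)
    (B E Z : Finset ℕ) (A' : ℕ → ℕ → F) : Prop :=
  Φ.X ⊆ B ∧ Φ.CY ⊆ E ∧ Z ⊆ E ∧ Disjoint Z Φ.CY ∧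
  (∀ i j, A' i j ≠ 0 → i ∈ B ∧ j ∈ E) ∧
  (∀ i ∈ Φ.X, ∀ j ∈ Φ.CY, A' i j = Φ.A1 i j) ∧
  (∀ i ∈ Φ.X, ∀ j ∈ Z, A' i j = 0) ∧
  (∀ j ∈ Z, zcol (↑B \ ↑Φ.X : Set ℕ) (fun i => A' i j)) ∧
  (∀ j ∈ E, j ∉ Φ.CY → j ∉ Z →
    IsFrameColOn Φ.Γ (↑B \ ↑Φ.X : Set ℕ) (fun i => A' i j)) ∧
  (∀ j ∈ E, j ∉ Φ.CY → j ∉ Z → maskOn Φ.X (fun i => A' i j) ∈ Φ.Λ) ∧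
  (∀ i ∈ B, i ∉ Φ.X → maskOn Φ.CY (fun j => A' i j) ∈ Φ.Δ)

/-- `A'` respects `Φ`. -/
def Respects (Φ : FrameTemplate F) (B E Z : Finset ℕ) (A' : ℕ → ℕ → F) : Prop :=
  RespectsWith (fun S v => IsUnitColOn S v) Φ B E Z A'

/-- `A'` virtually respects `Φ` (columns of `A'[B - X, Z]` may be unit or zero). -/
def VRespects (Φ : FrameTemplate F) (B E Z : Finset ℕ) (A' : ℕ → ℕ → F) : Prop :=
  RespectsWith (fun S v => IsZeroColOn S v ∨ IsUnitColOn S v) Φ B E Z A'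

/-- `A` is constructed from `A'`: they agree outside the `Z`-columns, and each
`Z`-column of `A` is the corresponding column of `A'` plus some `Y₁`-column of `A'`. -/
def BuiltFrom (Φ : FrameTemplate F) (Z : Finset ℕ) (A' A : ℕ → ℕ → F) : Prop :=
  (∀ j ∉ Z, ∀ i, A i j = A' i j) ∧
  (∀ j ∈ Z, ∃ y ∈ Φ.Y1, ∀ i, A i j = A' i j + A' i y)

end FrameTemplate

/-- `N` is the column (vector) matroid of the matrix `A` (rows indexed by `β`),
with ground set `E`. -/
def IsColMatroidOf {β : Type*} {F : Type} [Field F] (N : Matroid ℕ) (E : Finset ℕ)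
    (A : β → ℕ → F) : Prop :=
  N.E = ↑E ∧ ∀ I : Set ℕ,
    (N.Indep I ↔ I ⊆ ↑E ∧ LinearIndependent F (fun e : I => fun i => A i (e : ℕ)))

namespace FrameTemplate

variable {F : Type} [Field F]

/-- `M` conforms to `Φ` (with the respecting condition given by `resp`): `M` is isomorphic
to `M(A) ／ C ＼ Y₁` for a matrix `A` built from a matrix `A'` satisfying `resp`. -/
def ConformsWith (resp : FrameTemplate F → Finset ℕ → Finset ℕ → Finset ℕ →
      (ℕ → ℕ → F) → Prop) (M : Matroid α) (Φ : FrameTemplate F) : Prop :=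
  ∃ (B E Z : Finset ℕ) (A' A : ℕ → ℕ → F) (N N₁ : Matroid ℕ),
    resp Φ B E Z A' ∧ Φ.BuiltFrom Z A' A ∧ IsColMatroidOf N E A ∧
    IsContraction N₁ N ↑Φ.C ∧ MIso M (N₁ ↾ (N₁.E \ ↑Φ.Y1))

/-- `M` conforms to `Φ`. -/
def Conforms (M : Matroid α) (Φ : FrameTemplate F) : Prop :=
  ConformsWith (fun Φ B E Z A' => Φ.Respects B E Z A') M Φ

/-- `M` virtually conforms to `Φ`. -/
def VConforms (M : Matroid α) (Φ : FrameTemplate F) : Prop :=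
  ConformsWith (fun Φ B E Z A' => Φ.VRespects B E Z A') M Φ

end FrameTemplate

namespace FrameTemplate

variable {F : Type} [Field F]

/-- Operation (1): replace `Γ` with a proper subgroup. -/
def Op1 (Φ Φ' : FrameTemplate F) : Prop :=
  Φ'.Γ < Φ.Γ ∧ Φ'.C = Φ.C ∧ Φ'.X = Φ.X ∧ Φ'.Y0 = Φ.Y0 ∧ Φ'.Y1 = Φ.Y1 ∧
    Φ'.A1 = Φ.A1 ∧ Φ'.Δ = Φ.Δ ∧ Φ'.Λ = Φ.Λ

/-- Operation (2): replace `Λ` with a proper subgroup (closed under scaling by `Γ`). -/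
def Op2 (Φ Φ' : FrameTemplate F) : Prop :=
  Φ'.Γ = Φ.Γ ∧ Φ'.C = Φ.C ∧ Φ'.X = Φ.X ∧ Φ'.Y0 = Φ.Y0 ∧ Φ'.Y1 = Φ.Y1 ∧
    Φ'.A1 = Φ.A1 ∧ Φ'.Δ = Φ.Δ ∧ Φ'.Λ < Φ.Λ

/-- Operation (3): replace `Δ` with a proper subgroup (closed under scaling by `Γ`). -/
def Op3 (Φ Φ' : FrameTemplate F) : Prop :=
  Φ'.Γ = Φ.Γ ∧ Φ'.C = Φ.C ∧ Φ'.X = Φ.X ∧ Φ'.Y0 = Φ.Y0 ∧ Φ'.Y1 = Φ.Y1 ∧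
    Φ'.A1 = Φ.A1 ∧ Φ'.Δ < Φ.Δ ∧ Φ'.Λ = Φ.Λ

/-- Operation (4): remove an element `y` from `Y₁`. -/
def Op4 (Φ Φ' : FrameTemplate F) : Prop :=
  ∃ y ∈ Φ.Y1, Φ'.Γ = Φ.Γ ∧ Φ'.C = Φ.C ∧ Φ'.X = Φ.X ∧ Φ'.Y0 = Φ.Y0 ∧
    Φ'.Y1 = Φ.Y1.erase y ∧
    Φ'.A1 = (fun i j => if j = y then 0 else Φ.A1 i j) ∧
    (Φ'.Δ : Set (ℕ → F)) = maskOn Φ'.CY '' ↑Φ.Δ ∧ Φ'.Λ = Φ.Λ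

/-- An elementary row operation on the rows indexed by `X`. -/
def ElemRowOp (X : Finset ℕ) (e : (ℕ → F) → (ℕ → F)) : Prop :=
  (∃ x₁ ∈ X, ∃ x₂ ∈ X, x₁ ≠ x₂ ∧ e = fun v => v ∘ Equiv.swap x₁ x₂) ∨
  (∃ x ∈ X, ∃ c : F, c ≠ 0 ∧ e = fun v i => if i = x then c * v i else v i) ∨
  (∃ x₁ ∈ X, ∃ x₂ ∈ X, x₁ ≠ x₂ ∧
    ∃ c : F, e = fun v i => if i = x₂ then v i + c * v x₁ else v i)

/-- Operation (5): perform an elementary row operation on the `X`-rows of every matrix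
respecting `Φ`; this alters `A₁` and performs a change of basis on `Λ`. -/
def Op5 (Φ Φ' : FrameTemplate F) : Prop :=
  ∃ e, ElemRowOp Φ.X e ∧
    Φ'.Γ = Φ.Γ ∧ Φ'.C = Φ.C ∧ Φ'.X = Φ.X ∧ Φ'.Y0 = Φ.Y0 ∧ Φ'.Y1 = Φ.Y1 ∧
    Φ'.A1 = (fun i j => e (fun i' => Φ.A1 i' j) i) ∧
    Φ'.Δ = Φ.Δ ∧ (Φ'.Λ : Set (ℕ → F)) = e '' ↑Φ.Λ

/-- Operation (6): remove an element `x ∈ X` whose row is zero in every matrix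
respecting `Φ`. -/
def Op6 (Φ Φ' : FrameTemplate F) : Prop :=
  ∃ x ∈ Φ.X, (∀ B E Z A', Φ.Respects B E Z A' → ∀ j, A' x j = 0) ∧
    Φ'.Γ = Φ.Γ ∧ Φ'.C = Φ.C ∧ Φ'.X = Φ.X.erase x ∧ Φ'.Y0 = Φ.Y0 ∧ Φ'.Y1 = Φ.Y1 ∧
    Φ'.A1 = (fun i j => if i = x then 0 else Φ.A1 i j) ∧
    Φ'.Δ = Φ.Δ ∧ (Φ'.Λ : Set (ℕ → F)) = maskOn (Φ.X.erase x) '' ↑Φ.Λ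

/-- Operation (7): contract an element `c ∈ C` whose `A₁`-column is a unit column with
its nonzero entry in row `x`, where `λ_x = 0` for all `λ ∈ Λ` or `δ_c = 0` for all
`δ ∈ Δ`; remove `c` from `C` and `x` from `X`. -/
def Op7 (Φ Φ' : FrameTemplate F) : Prop :=
  ∃ c ∈ Φ.C, ∃ x ∈ Φ.X,
    Φ.A1 x c = 1 ∧ (∀ i, i ≠ x → Φ.A1 i c = 0) ∧
    ((∀ v ∈ Φ.Λ, v x = 0) ∨ (∀ v ∈ Φ.Δ, v c = 0)) ∧
    Φ'.Γ = Φ.Γ ∧ Φ'.C = Φ.C.erase c ∧ Φ'.X = Φ.X.erase x ∧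
    Φ'.Y0 = Φ.Y0 ∧ Φ'.Y1 = Φ.Y1 ∧
    Φ'.A1 = (fun i j => if i = x ∨ j = c then 0 else Φ.A1 i j) ∧
    (Φ'.Λ : Set (ℕ → F)) = maskOn (Φ.X.erase x) '' ↑Φ.Λ ∧
    (Φ'.Δ : Set (ℕ → F)) =
      maskOn Φ'.CY '' ((fun v : ℕ → F => v - v c • Φ.A1 x) '' ↑Φ.Δ)

/-- Operation (8): remove an element `c ∈ C` whose `A₁`-column is zero and with
`δ_c = 0` for all `δ ∈ Δ`. -/
def Op8 (Φ Φ' : FrameTemplate F) : Prop :=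
  ∃ c ∈ Φ.C, (∀ i, Φ.A1 i c = 0) ∧ (∀ v ∈ Φ.Δ, v c = 0) ∧
    Φ'.Γ = Φ.Γ ∧ Φ'.C = Φ.C.erase c ∧ Φ'.X = Φ.X ∧ Φ'.Y0 = Φ.Y0 ∧ Φ'.Y1 = Φ.Y1 ∧
    Φ'.A1 = Φ.A1 ∧ (Φ'.Δ : Set (ℕ → F)) = maskOn Φ'.CY '' ↑Φ.Δ ∧ Φ'.Λ = Φ.Λ

/-- Operation (10): remove an element `y` from `Y₀` (deleting `y` from every matroid
conforming to `Φ`). -/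
def Op10 (Φ Φ' : FrameTemplate F) : Prop :=
  ∃ y ∈ Φ.Y0, Φ'.Γ = Φ.Γ ∧ Φ'.C = Φ.C ∧ Φ'.X = Φ.X ∧ Φ'.Y0 = Φ.Y0.erase y ∧
    Φ'.Y1 = Φ.Y1 ∧
    Φ'.A1 = (fun i j => if j = y then 0 else Φ.A1 i j) ∧
    (Φ'.Δ : Set (ℕ → F)) = maskOn Φ'.CY '' ↑Φ.Δ ∧ Φ'.Λ = Φ.Λ

/-- Operation (11): for `x ∈ X` with `λ_x = 0` for every `λ ∈ Λ` and `y ∈ Y₀` whose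
`A₁`-column is (after row operations, which are available as operation (5)) a unit
column with nonzero entry in row `x`, contract `y` from every matroid conforming
to `Φ`. -/
def Op11 (Φ Φ' : FrameTemplate F) : Prop :=
  ∃ y ∈ Φ.Y0, ∃ x ∈ Φ.X,
    (∀ v ∈ Φ.Λ, v x = 0) ∧ Φ.A1 x y = 1 ∧ (∀ i, i ≠ x → Φ.A1 i y = 0) ∧
    Φ'.Γ = Φ.Γ ∧ Φ'.C = Φ.C ∧ Φ'.X = Φ.X.erase x ∧ Φ'.Y0 = Φ.Y0.erase y ∧
    Φ'.Y1 = Φ.Y1 ∧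
    Φ'.A1 = (fun i j => if i = x ∨ j = y then 0 else Φ.A1 i j) ∧
    (Φ'.Λ : Set (ℕ → F)) = maskOn (Φ.X.erase x) '' ↑Φ.Λ ∧
    (Φ'.Δ : Set (ℕ → F)) =
      maskOn Φ'.CY '' ((fun v : ℕ → F => v - v y • Φ.A1 x) '' ↑Φ.Δ)

/-- Operation (12): for `y ∈ Y₀` with `δ_y = 0` for every `δ ∈ Δ`, contract `y` from
every matroid conforming to `Φ`.  If the `A₁`-column of `y` is zero this just removes
`y`; otherwise (after row operations, available as operation (5)) the column of `y` is a
unit column with nonzero entry in some row `x`, which is removed together with `y`. -/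
def Op12 (Φ Φ' : FrameTemplate F) : Prop :=
  ∃ y ∈ Φ.Y0, (∀ v ∈ Φ.Δ, v y = 0) ∧
    (((∀ i, Φ.A1 i y = 0) ∧
      Φ'.Γ = Φ.Γ ∧ Φ'.C = Φ.C ∧ Φ'.X = Φ.X ∧ Φ'.Y0 = Φ.Y0.erase y ∧ Φ'.Y1 = Φ.Y1 ∧
      Φ'.A1 = Φ.A1 ∧ (Φ'.Δ : Set (ℕ → F)) = maskOn Φ'.CY '' ↑Φ.Δ ∧ Φ'.Λ = Φ.Λ) ∨
    (∃ x ∈ Φ.X, Φ.A1 x y = 1 ∧ (∀ i, i ≠ x → Φ.A1 i y = 0) ∧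
      Φ'.Γ = Φ.Γ ∧ Φ'.C = Φ.C ∧ Φ'.X = Φ.X.erase x ∧ Φ'.Y0 = Φ.Y0.erase y ∧
      Φ'.Y1 = Φ.Y1 ∧
      Φ'.A1 = (fun i j => if i = x ∨ j = y then 0 else Φ.A1 i j) ∧
      (Φ'.Λ : Set (ℕ → F)) = maskOn (Φ.X.erase x) '' ↑Φ.Λ ∧
      (Φ'.Δ : Set (ℕ → F)) = maskOn Φ'.CY '' ↑Φ.Δ))

/-- A single template operation, from Proposition 3.2 ((1)–(8)) and
Definition 3.3 ((10)–(12)). -/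
def Step (Φ Φ' : FrameTemplate F) : Prop :=
  Op1 Φ Φ' ∨ Op2 Φ Φ' ∨ Op3 Φ Φ' ∨ Op4 Φ Φ' ∨ Op5 Φ Φ' ∨ Op6 Φ Φ' ∨ Op7 Φ Φ' ∨
    Op8 Φ Φ' ∨ Op10 Φ Φ' ∨ Op11 Φ Φ' ∨ Op12 Φ Φ'

/-- `Φ'` is a template minor of `Φ`: it is obtained from `Φ` by repeatedly performing
the operations (1)-(8) and (10)-(12). -/
def IsTemplateMinor (Φ' Φ : FrameTemplate F) : Prop :=
  Relation.ReflTransGen Step Φ Φ'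

/-- `M` weakly conforms to `Φ`: `M` virtually conforms to some template minor of `Φ`. -/
def WConforms (M : Matroid α) (Φ : FrameTemplate F) : Prop :=
  ∃ Φ'', IsTemplateMinor Φ'' Φ ∧ VConforms M Φ''

/-- The preorder on templates: `Φ ⪯ Φ'` iff every matroid weakly conforming to `Φ`
weakly conforms to `Φ'`, i.e. `𝓜_w(Φ) ⊆ 𝓜_w(Φ')`. -/
def Preceq (Φ Φ' : FrameTemplate F) : Prop :=
  ∀ (α : Type) (M : Matroid α), WConforms M Φ → WConforms M Φ'

/-- Equivalence of templates: `𝓜_w(Φ) = 𝓜_w(Φ')`. -/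
def TEquiv (Φ Φ' : FrameTemplate F) : Prop :=
  ∀ (α : Type) (M : Matroid α), WConforms M Φ ↔ WConforms M Φ'

/-- A binary frame template: a frame template over `GF(2)` with `Γ` trivial. -/
def IsBinaryT (Φ : FrameTemplate (ZMod 2)) : Prop := Φ.Γ = ⊥

end FrameTemplate

namespace FrameTemplate

lemma bot_smul_mem {F : Type} [Field F] (G : AddSubgroup (ℕ → F)) :
    ∀ γ ∈ (⊥ : Subgroup Fˣ), ∀ v ∈ G, (γ : F) • v ∈ G := by
  intro γ hγ v hv
  rw [Subgroup.mem_bot] at hγ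
  subst hγ
  simpa using hv

lemma bot_supp {F : Type} [Field F] (S : Finset ℕ) :
    ∀ v ∈ (⊥ : AddSubgroup (ℕ → F)), ∀ i ∉ S, v i = 0 := by
  intro v hv i _
  rw [AddSubgroup.mem_bot] at hv
  simp [hv]

lemma fullOn_supp {F : Type} [Field F] (S : Finset ℕ) :
    ∀ v ∈ fullOn F S, ∀ i ∉ S, v i = 0 := fun _ hv => hv

/-- The trivial template `Φ₀`: all groups trivial and all sets empty. -/
def Phi0 : FrameTemplate (ZMod 2) where
  Γ := ⊥
  C := ∅
  X := ∅
  Y0 := ∅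
  Y1 := ∅
  disj := by simp
  A1 := fun _ _ => 0
  A1_supp := by intro i j h; exact absurd rfl h
  Δ := ⊥
  Δ_supp := bot_supp _
  Δ_smul := bot_smul_mem _
  Λ := ⊥
  Λ_supp := bot_supp _
  Λ_smul := bot_smul_mem _

/-- The template `Φ_C`: all groups trivial and all sets empty except `|C| = 1` and
`Δ ≅ ℤ/2ℤ`. -/
def PhiC : FrameTemplate (ZMod 2) where
  Γ := ⊥
  C := {0}
  X := ∅
  Y0 := ∅
  Y1 := ∅
  disj := by simp
  A1 := fun _ _ => 0
  A1_supp := by intro i j h; exact absurd rfl h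
  Δ := fullOn (ZMod 2) {0}
  Δ_supp := by simpa using fullOn_supp (F := ZMod 2) {0}
  Δ_smul := bot_smul_mem _
  Λ := ⊥
  Λ_supp := bot_supp _
  Λ_smul := bot_smul_mem _

/-- The template `Φ_X`: all groups trivial and all sets empty except `|X| = 1` and
`Λ ≅ ℤ/2ℤ`. -/
def PhiX : FrameTemplate (ZMod 2) where
  Γ := ⊥
  C := ∅
  X := {0}
  Y0 := ∅
  Y1 := ∅
  disj := by simp
  A1 := fun _ _ => 0
  A1_supp := by intro i j h; exact absurd rfl h
  Δ := ⊥
  Δ_supp := bot_supp _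
  Δ_smul := bot_smul_mem _
  Λ := fullOn (ZMod 2) {0}
  Λ_supp := fullOn_supp _
  Λ_smul := bot_smul_mem _

/-- The template `Φ_{Y₀}`: all groups trivial and all sets empty except `|Y₀| = 1` and
`Δ ≅ ℤ/2ℤ`. -/
def PhiY0 : FrameTemplate (ZMod 2) where
  Γ := ⊥
  C := ∅
  X := ∅
  Y0 := {0}
  Y1 := ∅
  disj := by simp
  A1 := fun _ _ => 0
  A1_supp := by intro i j h; exact absurd rfl h
  Δ := fullOn (ZMod 2) {0}
  Δ_supp := by simpa using fullOn_supp (F := ZMod 2) {0}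
  Δ_smul := bot_smul_mem _
  Λ := ⊥
  Λ_supp := bot_supp _
  Λ_smul := bot_smul_mem _

/-- The template `Φ_{CX}`: `Y₀ = Y₁ = ∅`, `|C| = |X| = 1`, `Δ ≅ Λ ≅ ℤ/2ℤ`, `Γ` trivial,
and `A₁ = [1]`. -/
def PhiCX : FrameTemplate (ZMod 2) where
  Γ := ⊥
  C := {0}
  X := {1}
  Y0 := ∅
  Y1 := ∅
  disj := by simp
  A1 := fun i j => if i = 1 ∧ j = 0 then 1 else 0
  A1_supp := by
    intro i j h
    by_cases hc : i = 1 ∧ j = 0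
    · obtain ⟨hi, hj⟩ := hc
      subst hi; subst hj
      simp
    · simp [hc] at h
  Δ := fullOn (ZMod 2) {0}
  Δ_supp := by simpa using fullOn_supp (F := ZMod 2) {0}
  Δ_smul := bot_smul_mem _
  Λ := fullOn (ZMod 2) {1}
  Λ_supp := fullOn_supp _
  Λ_smul := bot_smul_mem _

/-- The template `Φ_{Y₁}`: all groups trivial, `C = Y₀ = ∅`, `|Y₁| = 3`, `|X| = 2`, and
`A₁ = [[1,0,1],[0,1,1]]` (rows `0, 1`; columns `2, 3, 4`). -/
def PhiY1 : FrameTemplate (ZMod 2) where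
  Γ := ⊥
  C := ∅
  X := {0, 1}
  Y0 := ∅
  Y1 := {2, 3, 4}
  disj := by simp [Finset.disjoint_left]
  A1 := fun i j =>
    if (i = 0 ∧ (j = 2 ∨ j = 4)) ∨ (i = 1 ∧ (j = 3 ∨ j = 4)) then 1 else 0
  A1_supp := by
    intro i j h
    by_cases hc : (i = 0 ∧ (j = 2 ∨ j = 4)) ∨ (i = 1 ∧ (j = 3 ∨ j = 4))
    · constructor
      · rcases hc with ⟨hi, _⟩ | ⟨hi, _⟩ <;> subst hi <;> simp
      · rcases hc with ⟨_, hj | hj⟩ | ⟨_, hj | hj⟩ <;> subst hj <;> simp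
    · simp [hc] at h
  Δ := ⊥
  Δ_supp := bot_supp _
  Δ_smul := bot_smul_mem _
  Λ := ⊥
  Λ_supp := bot_supp _
  Λ_smul := bot_smul_mem _

/-- A trivial template: one that is `⪯ Φ₀`. -/
def IsTrivialT (Φ : FrameTemplate (ZMod 2)) : Prop := Preceq Φ Phi0

variable {F : Type} [Field F]

/-- `Φ` is in standard form, with the witnessing partitions `C = C₀ ∪ C₁` and
`X = X₀ ∪ X₁`: `A₁[X₀, C₀]` is an identity matrix and `A₁[X₁, C]` is a zero matrix. -/
def StandardFormOn (Φ : FrameTemplate F) (C0 C1 X0 X1 : Finset ℕ) : Prop :=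
  Φ.C = C0 ∪ C1 ∧ Disjoint C0 C1 ∧ Φ.X = X0 ∪ X1 ∧ Disjoint X0 X1 ∧
  (∃ g : ℕ → ℕ, Set.BijOn g ↑X0 ↑C0 ∧
    ∀ x ∈ X0, ∀ c ∈ C0, Φ.A1 x c = if g x = c then 1 else 0) ∧
  (∀ x ∈ X1, ∀ c ∈ Φ.C, Φ.A1 x c = 0)

/-- `Φ` is in standard form. -/
def StandardForm (Φ : FrameTemplate F) : Prop :=
  ∃ C0 C1 X0 X1, StandardFormOn Φ C0 C1 X0 X1

end FrameTemplate


open FrameTemplate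

/-- The set of binary frame templates `{Φ₁, …, Φ_s, Ψ₁, …, Ψ_t}` describes the
minor-closed class `𝓜` of binary matroids (Definition 3.16 of the paper). -/
def Describes (𝓜 : Set (Matroid ℕ)) (Φs Ψs : List (FrameTemplate (ZMod 2))) : Prop :=
  ∃ k l m : ℕ, 0 < k ∧ 0 < l ∧ 0 < m ∧
    (∀ Φ ∈ Φs, ∀ M : Matroid ℕ, WConforms M Φ → M ∈ 𝓜) ∧
    (∀ Ψ ∈ Ψs, ∀ M : Matroid ℕ, WConforms M Ψ → M✶ ∈ 𝓜) ∧
    (∀ M ∈ 𝓜, IsSimple M → VertConn M k → (l : ℕ∞) ≤ M.E.encard →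
      ¬ (∃ N : Matroid ℕ, MinorOf N M ∧ IsPG m N) →
      ((∃ Φ ∈ Φs, VConforms M Φ) ∨ (∃ Ψ ∈ Ψs, VConforms M✶ Ψ))) ∧
    (∀ Φ ∈ Φs ++ Ψs, IsTrivialT Φ ∨
      ∃ Φ' ∈ [PhiX, PhiC, PhiCX, PhiY0, PhiY1], Preceq Φ' Φ)

section AuxLinAlg

open Submodule Set

variable {F : Type} [Field F] {W : Type*} [AddCommGroup W] [Module F W]

omit [AddCommGroup W] [Module F W] in
lemma linearIndependent_insert' {ι V K : Type*} [DivisionRing K] [AddCommGroup V]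
    [Module K V] {s : Set ι} {a : ι} {f : ι → V} (has : a ∉ s) :
    LinearIndependent K (fun x : ↥(insert a s) => f x) ↔
      LinearIndependent K (fun x : s => f x) ∧ f a ∉ span K (f '' s) :=
  linearIndepOn_insert has

lemma linAug (v : ℕ → W) {I J : Set ℕ} (hIfin : I.Finite) (hJfin : J.Finite)
    (hI : LinearIndependent F (fun e : I => v e))
    (hJ : LinearIndependent F (fun e : J => v e))
    (hcard : I.ncard < J.ncard) :
    ∃ e ∈ J, e ∉ I ∧ LinearIndependent F (fun x : ↥(insert e I) => v x) := by
  by_contra hcon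
  push_neg at hcon
  have hsub : ∀ e : J, v e ∈ span F (v '' I) := by
    rintro ⟨e, he⟩
    by_cases heI : e ∈ I
    · exact subset_span ⟨e, heI, rfl⟩
    by_contra hnot
    exact hcon e he heI ((linearIndependent_insert' heI).2 ⟨hI, hnot⟩)
  haveI := hJfin.fintype
  haveI : FiniteDimensional F (span F (v '' I)) :=
    FiniteDimensional.span_of_finite F (hIfin.image v)
  have hb : LinearIndependent F (fun e : J => (⟨v e, hsub e⟩ : span F (v '' I))) := by
    apply LinearIndependent.of_comp (span F (v '' I)).subtype
    exact hJ
  have h1 : J.ncard ≤ Module.finrank F (span F (v '' I)) := by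
    have h := hb.fintype_card_le_finrank
    rwa [← Set.toFinset_card, ← Set.ncard_eq_toFinset_card' J] at h
  haveI := (hIfin.image v).fintype
  have h2 : Module.finrank F (span F (v '' I)) ≤ I.ncard := by
    refine le_trans (finrank_span_le_card (v '' I)) ?_
    rw [← Set.ncard_eq_toFinset_card' (v '' I)]
    exact Set.ncard_image_le hIfin
  omega

/-- The column matroid of a family of vectors, with ground set `E`. -/
noncomputable def colMat (F : Type) [Field F] {W : Type*} [AddCommGroup W] [Module F W]
    (v : ℕ → W) (E : Finset ℕ) : Matroid ℕ :=
  (IndepMatroid.ofFinite (E := (E : Set ℕ)) E.finite_toSet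
    (fun I => I ⊆ ↑E ∧ LinearIndependent F (fun e : I => v e))
    ⟨Set.empty_subset _, linearIndependent_empty_type⟩
    (fun I J hJ hIJ => ⟨hIJ.trans hJ.1,
      hJ.2.comp (Set.inclusion hIJ) (Set.inclusion_injective hIJ)⟩)
    (fun I J hI hJ hc => by
      obtain ⟨e, heJ, heI, h⟩ := linAug (F := F) v
        (E.finite_toSet.subset hI.1) (E.finite_toSet.subset hJ.1) hI.2 hJ.2 hc
      exact ⟨e, heJ, heI, Set.insert_subset (hJ.1 heJ) hI.1, h⟩)
    (fun I hI => hI.1)).matroid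

@[simp] lemma colMat_E (v : ℕ → W) (E : Finset ℕ) : (colMat F v E).E = ↑E := rfl

@[simp] lemma colMat_indep (v : ℕ → W) (E : Finset ℕ) {I : Set ℕ} :
    (colMat F v E).Indep I ↔ I ⊆ ↑E ∧ LinearIndependent F (fun e : I => v e) := by
  simp [colMat]

/-- The contraction of `colMat v E` by the element `0`, assuming `v 0 ≠ 0`. -/
noncomputable def conMat (F : Type) [Field F] {W : Type*} [AddCommGroup W] [Module F W]
    (v : ℕ → W) (E : Finset ℕ) (hv0 : v 0 ≠ 0) : Matroid ℕ :=
  (IndepMatroid.ofFinite (E := (E : Set ℕ) \ {0}) (E.finite_toSet.diff)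
    (fun I => I ⊆ ↑E \ {0} ∧ LinearIndependent F (fun e : ↥(insert 0 I) => v e))
    ⟨Set.empty_subset _, by
      refine (linearIndependent_insert' (by simp)).2 ⟨linearIndependent_empty_type, ?_⟩
      simpa using hv0⟩
    (fun I J hJ hIJ => ⟨hIJ.trans hJ.1,
      hJ.2.comp (Set.inclusion (Set.insert_subset_insert hIJ))
        (Set.inclusion_injective _)⟩)
    (fun I J hI hJ hc => by
      have h0I : (0 : ℕ) ∉ I := fun h => (hI.1 h).2 rfl
      have h0J : (0 : ℕ) ∉ J := fun h => (hJ.1 h).2 rfl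
      have hIfin : I.Finite := (E.finite_toSet.diff).subset hI.1
      have hJfin : J.Finite := (E.finite_toSet.diff).subset hJ.1
      obtain ⟨e, heJ, heI, h⟩ := linAug (F := F) v
        (hIfin.insert 0) (hJfin.insert 0) hI.2 hJ.2 (by
          rw [Set.ncard_insert_of_notMem h0I hIfin, Set.ncard_insert_of_notMem h0J hJfin]
          omega)
      rcases Set.mem_insert_iff.1 heJ with rfl | heJ'
      · exact absurd (Set.mem_insert _ _) heI
      refine ⟨e, heJ', fun h' => heI (Set.mem_insert_of_mem _ h'), ?_, ?_⟩
      · exact Set.insert_subset (hJ.1 heJ') hI.1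
      · rwa [Set.insert_comm] at h)
    (fun I hI => hI.1)).matroid

@[simp] lemma conMat_E (v : ℕ → W) (E : Finset ℕ) (hv0 : v 0 ≠ 0) :
    (conMat F v E hv0).E = ↑E \ {0} := rfl

@[simp] lemma conMat_indep (v : ℕ → W) (E : Finset ℕ) (hv0 : v 0 ≠ 0) {I : Set ℕ} :
    (conMat F v E hv0).Indep I ↔
      I ⊆ ↑E \ {0} ∧ LinearIndependent F (fun e : ↥(insert 0 I) => v e) := by
  simp [conMat]

end AuxLinAlg


section AuxHelpers

open Set

variable {F : Type} [Field F]

lemma maskOn_mem_fullOn (S : Finset ℕ) (v : ℕ → F) : maskOn S v ∈ fullOn F S :=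
  fun i hi => if_neg hi

lemma maskOn_empty (v : ℕ → F) : maskOn (∅ : Finset ℕ) v = 0 :=
  funext fun i => if_neg (by simp)

lemma isFrameColOn_insert {Γ : Subgroup Fˣ} {S : Set ℕ} {v : ℕ → F}
    (h : IsFrameColOn Γ S v) {a : ℕ} (ha : v a = 0) : IsFrameColOn Γ (insert a S) v := by
  rcases h with h | h | ⟨b₁, hb₁, b₂, hb₂, hne, h1, h2, h3⟩
  · left
    intro b hb
    rcases hb with rfl | hb
    · exact ha
    · exact h b hb
  · right; left
    obtain ⟨b, hb, h1, h2⟩ := h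
    refine ⟨b, Set.mem_insert_of_mem _ hb, h1, ?_⟩
    intro b' hb' hne
    rcases hb' with rfl | hb'
    · exact ha
    · exact h2 b' hb' hne
  · right; right
    refine ⟨b₁, Set.mem_insert_of_mem _ hb₁, b₂, Set.mem_insert_of_mem _ hb₂, hne, h1, h2, ?_⟩
    intro b hb hne1 hne2
    rcases hb with rfl | hb
    · exact ha
    · exact h3 b hb hne1 hne2

lemma isFrameColOn_comp_equiv {Γ : Subgroup Fˣ} {S : Set ℕ} {v : ℕ → F}
    (π : Equiv ℕ ℕ) (h : IsFrameColOn Γ S v) : IsFrameColOn Γ (π ⁻¹' S) (v ∘ π) := by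
  rcases h with h | h | ⟨b₁, hb₁, b₂, hb₂, hne, h1, h2, h3⟩
  · exact Or.inl fun b hb => h _ hb
  · right; left
    obtain ⟨b, hb, h1, h2⟩ := h
    refine ⟨π.symm b, by simp [hb], by simp [h1], ?_⟩
    intro b' hb' hne
    exact h2 _ hb' (fun hc => hne (by simp [← hc]))
  · right; right
    refine ⟨π.symm b₁, by simp [hb₁], π.symm b₂, by simp [hb₂],
      fun hc => hne (by simpa using congrArg π hc), by simp [h1], by simp [h2], ?_⟩
    intro b hb hne1 hne2
    exact h3 _ hb (fun hc => hne1 (by simp [← hc])) (fun hc => hne2 (by simp [← hc]))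

lemma MIso.refl (M : Matroid α) : MIso M M :=
  ⟨id, by simpa using Set.bijOn_id M.E, fun I _ => by simp⟩

lemma MIso.trans {M : Matroid α} {N : Matroid β} {P : Matroid γ}
    (h1 : MIso M N) (h2 : MIso N P) : MIso M P := by
  obtain ⟨f, hf, hfi⟩ := h1
  obtain ⟨g, hg, hgi⟩ := h2
  refine ⟨g ∘ f, hg.comp hf, fun I hI => ?_⟩
  rw [hfi I hI, Set.image_comp, hgi (f '' I) ?_]
  calc f '' I ⊆ f '' M.E := Set.image_mono hI
  _ = N.E := hf.image_eq

lemma isContraction_self_empty (M : Matroid α) : IsContraction M M ∅ := by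
  refine ⟨by simp, fun I => ?_⟩
  constructor
  · intro hI
    exact ⟨by simpa using hI.subset_ground, ∅, by simpa using M.empty_indep.isBasis_self,
      by simpa using hI⟩
  · rintro ⟨hIE, J, hJ, hIJ⟩
    have hJe : J = ∅ := by simpa using (by simpa using hJ : M.IsBasis J ∅).subset
    subst hJe
    simpa using hIJ

lemma IsContraction.eq_of_empty {M N : Matroid α} (h : IsContraction N M ∅) : N = M := by
  have h2 := isContraction_self_empty M
  refine Matroid.ext_indep (by simp [h.1]) fun ⦃I⦄ _ => ?_
  rw [h.2 I, h2.2 I]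

end AuxHelpers


section AuxCore

open Submodule Set

variable {F : Type} [Field F]

/-- The unit vector at coordinate 1. -/
def eOne (F : Type) [Field F] : ℕ → F := fun i => if i = 1 then 1 else 0

lemma notMem_span_of_one_ne_zero {s : Set (ℕ → F)} (h : ∀ u ∈ s, u 1 = 0)
    {x : ℕ → F} (hx : x 1 ≠ 0) : x ∉ span F s := by
  intro hmem
  have hle : span F s ≤ LinearMap.ker (LinearMap.proj (R := F) (φ := fun _ : ℕ => F) 1) :=
    span_le.2 fun u hu => LinearMap.mem_ker.2 (h u hu)
  exact hx (hle hmem)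

lemma mem_span_of_mem_span {s : Set (ℕ → F)} (h : ∀ u ∈ s, u 1 = 0) {x : ℕ → F}
    (hx1 : x 1 = 0) :
    x + eOne F ∈ span F (insert (eOne F) s) ↔ x ∈ span F s := by
  rw [mem_span_insert]
  constructor
  · rintro ⟨a, z, hz, hxz⟩
    have hz1 : z 1 = 0 := by
      have hle : span F s ≤ LinearMap.ker (LinearMap.proj (R := F) (φ := fun _ : ℕ => F) 1) :=
        span_le.2 fun u hu => LinearMap.mem_ker.2 (h u hu)
      exact hle hz
    have ha : a = 1 := by
      have h1 := congrFun hxz 1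
      simp [eOne, hx1, hz1] at h1
      first | exact h1 | exact h1.symm
    subst ha
    have : x = z := by
      funext i
      have h2 := congrFun hxz i
      simp only [Pi.add_apply, Pi.smul_apply, one_smul] at h2 ⊢
      by_cases hi : i = 1
      · simp [hi, hx1, hz1]
      · simpa [eOne, hi] using h2
    rwa [this]
  · intro hxs
    exact ⟨1, x, hxs, by rw [one_smul]; abel⟩

lemma reindex_succ {c col₂ : ℕ → (ℕ → F)} {I : Set ℕ}
    (hcol : ∀ e ∈ I, col₂ (e + 1) = c e) :
    (LinearIndependent F fun x : ↥((· + 1) '' I) => col₂ ↑x) ↔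
      LinearIndependent F fun e : I => c ↑e := by
  have hinj : Function.Injective (· + 1 : ℕ → ℕ) := fun a b h => by simpa using h
  have h : (fun x : ↥((· + 1) '' I) => col₂ ↑x) ∘ ⇑(Equiv.Set.image (· + 1) I hinj) =
      fun e : I => c ↑e := by
    funext e
    have hco : (↑(Equiv.Set.image (· + 1) I hinj e) : ℕ) = ↑e + 1 := by
      simp [Equiv.Set.image, Equiv.Set.imageOfInjOn]
    show col₂ ↑(Equiv.Set.image (· + 1) I hinj e) = c ↑e
    rw [hco, hcol e e.2]
  exact (linearIndependent_equiv' _ h).symm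

lemma image_succ_image {c col₂ : ℕ → (ℕ → F)} {I : Set ℕ}
    (hcol : ∀ e ∈ I, col₂ (e + 1) = c e) :
    col₂ '' ((· + 1) '' I) = c '' I := by
  rw [Set.image_image]
  exact Set.image_congr hcol

/-- Core equivalence: extending a family of columns vanishing at coordinate `1` by the
column `c 0 + e₁` (at new index `0`), replacing the column of `0` by `e₁` (at index `1`),
and shifting all other columns, preserves linear independence after "contracting" the
new index `0`. -/
lemma core_equiv {c col₂ : ℕ → (ℕ → F)}
    (hvan : ∀ e, c e 1 = 0)
    (h0col : col₂ 0 = c 0 + eOne F) (h1col : col₂ 1 = eOne F)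
    (hsucc : ∀ e, e ≠ 0 → col₂ (e + 1) = c e) (I : Set ℕ) :
    LinearIndependent F (fun x : ↥(insert 0 ((· + 1) '' I)) => col₂ ↑x) ↔
      LinearIndependent F (fun e : I => c ↑e) := by
  have h0J : (0 : ℕ) ∉ (· + 1) '' I := by
    rintro ⟨e, -, h⟩
    have : e + 1 = 0 := h
    omega
  have he1 : (eOne F) 1 = 1 := by simp [eOne]
  by_cases h0I : 0 ∈ I
  · -- I = insert 0 I'
    set I' := I \ {0} with hI'
    have hII : I = insert 0 I' := by
      rw [hI', Set.insert_diff_singleton, Set.insert_eq_self.2 h0I]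
    have h0I' : (0 : ℕ) ∉ I' := by simp [hI']
    have hJ : (· + 1) '' I = insert 1 ((· + 1) '' I') := by
      rw [hII, Set.image_insert_eq]
    have h1J' : (1 : ℕ) ∉ (· + 1) '' I' := by
      rintro ⟨e, he, hh⟩
      have he0 : e = 0 := by simpa using hh
      exact h0I' (he0 ▸ he)
    have hcol' : ∀ e ∈ I', col₂ (e + 1) = c e := fun e he => hsucc e (by
      intro h; exact h0I' (h ▸ he))
    have hvan' : ∀ u ∈ c '' I', u 1 = 0 := by rintro u ⟨e, -, rfl⟩; exact hvan e
    rw [hJ, hII]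
    rw [linearIndependent_insert' (a := 0) (show (0:ℕ) ∉ insert 1 ((· + 1) '' I') by
      rw [← hJ]; exact h0J)]
    rw [linearIndependent_insert' (a := 1) h1J']
    rw [linearIndependent_insert' (a := 0) h0I']
    rw [reindex_succ hcol', image_succ_image hcol', h0col, h1col]
    rw [Set.image_insert_eq, h1col, image_succ_image hcol']
    constructor
    · rintro ⟨⟨hli, -⟩, hnot⟩
      refine ⟨hli, fun hmem => hnot ?_⟩
      rw [mem_span_of_mem_span hvan' (hvan 0)]
      exact hmem
    · rintro ⟨hli, hnot⟩
      refine ⟨⟨hli, notMem_span_of_one_ne_zero hvan' (by rw [he1]; exact one_ne_zero)⟩, ?_⟩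
      rw [mem_span_of_mem_span hvan' (hvan 0)]
      exact hnot
  · have hcol' : ∀ e ∈ I, col₂ (e + 1) = c e := fun e he => hsucc e (fun h => h0I (h ▸ he))
    have hvan' : ∀ u ∈ c '' I, u 1 = 0 := by rintro u ⟨e, -, rfl⟩; exact hvan e
    rw [linearIndependent_insert' (a := 0) h0J, reindex_succ hcol', image_succ_image hcol',
      h0col]
    constructor
    · rintro ⟨hli, -⟩; exact hli
    · intro hli
      refine ⟨hli, notMem_span_of_one_ne_zero hvan' ?_⟩
      rw [Pi.add_apply, hvan 0, he1, zero_add]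
      exact one_ne_zero

end AuxCore


section AuxConform

open Set

variable {F : Type} [Field F]

lemma lin_comp_pi (π : Equiv ℕ ℕ) {ι : Type*} (u : ι → (ℕ → F)) :
    LinearIndependent F (fun x : ι => u x ∘ π) ↔ LinearIndependent F u := by
  have h : (fun x : ι => u x ∘ π) =
      (LinearEquiv.funCongrLeft F F π).toLinearMap ∘ u := by
    funext x
    rfl
  rw [h]
  exact LinearMap.linearIndependent_iff _ (LinearEquiv.ker _)

lemma isContraction_conMat {W : Type*} [AddCommGroup W] [Module F W]
    (v : ℕ → W) (E : Finset ℕ) (h0E : 0 ∈ E) (hv0 : v 0 ≠ 0) :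
    IsContraction (conMat F v E hv0) (colMat F v E) {0} := by
  have hind0 : (colMat F v E).Indep {0} := by
    rw [colMat_indep]
    refine ⟨by simpa using h0E, ?_⟩
    have h : ({0} : Set ℕ) = insert 0 (∅ : Set ℕ) := by simp
    rw [h, linearIndependent_insert' (by simp)]
    exact ⟨linearIndependent_empty_type, by simpa using hv0⟩
  have hKE : ({0} : Set ℕ) ∩ (colMat F v E).E = {0} := by
    rw [colMat_E]
    exact Set.inter_eq_self_of_subset_left (by simpa using h0E)
  refine ⟨by simp, fun I => ?_⟩
  rw [conMat_indep, hKE]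
  constructor
  · rintro ⟨hsub, hlin⟩
    refine ⟨by simpa using hsub, {0}, hind0.isBasis_self, ?_⟩
    rw [Set.union_singleton, colMat_indep]
    exact ⟨Set.insert_subset (by simpa using h0E) (fun x hx => (hsub hx).1), hlin⟩
  · rintro ⟨hsub, J, hJbasis, hJindep⟩
    have hJ : J = {0} := by
      rcases Set.subset_singleton_iff_eq.1 hJbasis.subset with h | h
      · exfalso
        have := hJbasis.eq_of_subset_indep hind0 (h ▸ Set.empty_subset _) Subset.rfl
        rw [h] at this
        simpa using this.symm
      · exact h
    subst hJ
    rw [Set.union_singleton, colMat_indep] at hJindep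
    exact ⟨by simpa using hsub, hJindep.2⟩

lemma phiY0_CY : PhiY0.CY = {0} := rfl
lemma phiY1_CY : PhiY1.CY = ({2, 3, 4} : Finset ℕ) := rfl
lemma phiC_CY : PhiC.CY = {0} := rfl
lemma phiCX_CY : PhiCX.CY = {0} := rfl
lemma phiX_CY : PhiX.CY = (∅ : Finset ℕ) := rfl

lemma Conforms.vConforms {α : Type*} {M : Matroid α} {Φ : FrameTemplate F}
    (h : Conforms M Φ) : VConforms M Φ := by
  obtain ⟨B, E, Z, A', A, N, N1, hresp, hrest⟩ := h
  obtain ⟨h1, h2, h3, h4, h5, h6, h7, h8, h9, h10, h11⟩ := hresp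
  exact ⟨B, E, Z, A', A, N, N1,
    ⟨h1, h2, h3, h4, h5, h6, h7, fun j hj => Or.inr (h8 j hj), h9, h10, h11⟩, hrest⟩

lemma VConforms.wConforms {α : Type*} {M : Matroid α} {Φ : FrameTemplate F}
    (h : VConforms M Φ) : WConforms M Φ :=
  ⟨Φ, Relation.ReflTransGen.refl, h⟩

/-- Unpacking a matroid conforming to `PhiY0`. -/
lemma conforms_phiY0_elim {α : Type*} {M : Matroid α} (h : Conforms M PhiY0) :
    ∃ (B E : Finset ℕ) (A : ℕ → ℕ → ZMod 2) (N : Matroid ℕ),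
      0 ∈ E ∧ (∀ i j, A i j ≠ 0 → i ∈ B ∧ j ∈ E) ∧
      (∀ j ∈ E, j ≠ 0 → IsFrameColOn (⊥ : Subgroup (ZMod 2)ˣ) (↑B) (fun i => A i j)) ∧
      IsColMatroidOf N E A ∧ MIso M N := by
  obtain ⟨B, E, Z, A', A, N, N1, hresp, hbuilt, hcolm, hcontr, hiso⟩ := h
  obtain ⟨h1, h2, h3, h4, h5, h6, h7, h8, h9, h10, h11⟩ := hresp
  have hZ : Z = ∅ := by
    refine Finset.eq_empty_of_forall_notMem fun j hj => ?_
    obtain ⟨y, hy, -⟩ := hbuilt.2 j hj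
    exact absurd hy (Finset.notMem_empty y)
  have hAA : A = A' := by
    funext i j
    exact hbuilt.1 j (by rw [hZ]; exact Finset.notMem_empty j) i
  have hN1 : N1 = N := by
    refine IsContraction.eq_of_empty ?_
    have hC : ((PhiY0.C : Finset ℕ) : Set ℕ) = ∅ := by simp [PhiY0]
    rwa [hC] at hcontr
  have hrestr : N1 ↾ (N1.E \ ↑PhiY0.Y1) = N := by
    have hY1 : ((PhiY0.Y1 : Finset ℕ) : Set ℕ) = ∅ := by simp [PhiY0]
    rw [hY1, Set.diff_empty, hN1, Matroid.restrict_ground_eq_self]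
  refine ⟨B, E, A, N, h2 (by simp [phiY0_CY]), ?_, ?_, hcolm, by rwa [hrestr] at hiso⟩
  · rw [hAA]; exact h5
  · intro j hjE hj0
    have hfr := h9 j hjE (by simp [phiY0_CY, hj0]) (by rw [hZ]; exact Finset.notMem_empty j)
    have hX : ((PhiY0.X : Finset ℕ) : Set ℕ) = ∅ := by simp [PhiY0]
    rw [hX, Set.diff_empty] at hfr
    rw [hAA]
    exact hfr

end AuxConform


section AuxY0Main

open Set

lemma wconforms_of_conforms_phiY0 {α : Type*} {M : Matroid α} (h : Conforms M PhiY0) :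
    WConforms M PhiC ∧ WConforms M PhiCX := by
  classical
  obtain ⟨B, E, A, N, h0E, hsupp, hframe, ⟨hNE, hNind⟩, hiso⟩ := conforms_phiY0_elim h
  set s : ℕ := B.sup id + 1 with hs
  have hsB : s ∉ B := fun hmem => by
    have h1 := Finset.le_sup (f := id) hmem
    simp only [id] at h1
    omega
  set π : Equiv ℕ ℕ := Equiv.swap 1 s with hπ
  have hπ1 : π 1 = s := Equiv.swap_apply_left 1 s
  set c : ℕ → ℕ → ZMod 2 := fun e i => A (π i) e with hc
  have hvan : ∀ e, c e 1 = 0 := by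
    intro e
    show A (π 1) e = 0
    rw [hπ1]
    by_contra hne
    exact hsB (hsupp _ _ hne).1
  set col₂ : ℕ → ℕ → ZMod 2 :=
    fun j => if j = 0 then c 0 + eOne (ZMod 2) else if j = 1 then eOne (ZMod 2)
      else c (j - 1) with hcol₂
  have h0col : col₂ 0 = c 0 + eOne (ZMod 2) := by simp [hcol₂]
  have h1col : col₂ 1 = eOne (ZMod 2) := by simp [hcol₂]
  have hsucc : ∀ e, e ≠ 0 → col₂ (e + 1) = c e := by
    intro e he
    show (if e + 1 = 0 then _ else if e + 1 = 1 then _ else _) = c e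
    rw [if_neg (by omega), if_neg (by omega)]
    simp
  have hne0 : col₂ 0 ≠ 0 := by
    intro hzero
    have h1 : col₂ 0 1 = 0 := congrFun hzero 1
    rw [h0col] at h1
    simp only [Pi.add_apply, hvan 0, eOne, if_pos rfl, zero_add] at h1
    exact one_ne_zero h1
  set E₂ : Finset ℕ := insert 0 (E.image (· + 1)) with hE₂
  set B₂ : Finset ℕ := insert 1 (B.image π) with hB₂
  have h0E₂ : 0 ∈ E₂ := Finset.mem_insert_self _ _
  have h1E₂ : 1 ∈ E₂ := by
    rw [hE₂]
    exact Finset.mem_insert_of_mem (Finset.mem_image.2 ⟨0, h0E, rfl⟩)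
  set N₂ := colMat (ZMod 2) col₂ E₂ with hN₂
  set N₁ := conMat (ZMod 2) col₂ E₂ hne0 with hN₁
  have hcontr : IsContraction N₁ N₂ {0} := isContraction_conMat col₂ E₂ h0E₂ hne0
  -- ground set of N₁
  have h0img : (0 : ℕ) ∉ (· + 1) '' (↑E : Set ℕ) := by
    rintro ⟨e, -, he⟩
    have : e + 1 = 0 := he
    omega
  have hgr : (↑E₂ : Set ℕ) \ {0} = (· + 1) '' ↑E := by
    rw [hE₂, Finset.coe_insert, Set.insert_diff_self_of_notMem (by
      rw [Finset.coe_image]; exact h0img), Finset.coe_image]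
  -- key independence transfer
  have hkey : ∀ I : Set ℕ,
      LinearIndependent (ZMod 2) (fun e : I => fun i => A i (e : ℕ)) ↔
      LinearIndependent (ZMod 2) (fun x : ↥(insert 0 ((· + 1) '' I)) => col₂ ↑x) := by
    intro I
    rw [core_equiv hvan h0col h1col hsucc I]
    exact (lin_comp_pi π (fun e : I => fun i => A i (e : ℕ))).symm
  -- the isomorphism M ≅ N₁
  have hmiso : MIso M N₁ := by
    refine hiso.trans ⟨(· + 1), ?_, ?_⟩
    · rw [hNE, show N₁.E = (· + 1) '' ↑E from hgr]
      have hinj : Function.Injective (fun x : ℕ => x + 1) := fun a b hab => by simpa using hab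
      exact hinj.injOn.bijOn_image
    · intro I hI
      rw [hNE] at hI
      rw [hNind I, hN₁, conMat_indep]
      constructor
      · rintro ⟨hIE, hlin⟩
        refine ⟨?_, (hkey I).1 hlin⟩
        rw [hgr]
        exact Set.image_mono hIE
      · rintro ⟨-, hlin⟩
        exact ⟨hI, (hkey I).2 hlin⟩
  -- matrix for N₂
  set A₂ : ℕ → ℕ → ZMod 2 := fun i j => col₂ j i with hA₂
  have hcolm₂ : IsColMatroidOf N₂ E₂ A₂ := ⟨rfl, fun I => colMat_indep col₂ E₂⟩
  -- support of A₂
  have hππ : ∀ i, π (π i) = i := fun i => Equiv.swap_apply_self 1 s i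
  have hmemB₂ : ∀ i, π i ∈ B → i ∈ B₂ := by
    intro i hi
    rw [hB₂]
    exact Finset.mem_insert_of_mem (Finset.mem_image.2 ⟨π i, hi, hππ i⟩)
  have hcolj : ∀ j, j ≠ 0 → j ≠ 1 → col₂ j = c (j - 1) := by
    intro j h0 h1
    show (if j = 0 then _ else if j = 1 then _ else _) = _
    rw [if_neg h0, if_neg h1]
  have hsupp₂ : ∀ i j, A₂ i j ≠ 0 → i ∈ B₂ ∧ j ∈ E₂ := by
    intro i j hne
    have hne' : col₂ j i ≠ 0 := hne
    by_cases hj0 : j = 0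
    · subst hj0
      rw [h0col] at hne'
      refine ⟨?_, h0E₂⟩
      by_cases hi1 : i = 1
      · rw [hi1, hB₂]; exact Finset.mem_insert_self _ _
      · have hc0 : c 0 i ≠ 0 := by
          intro hcc
          apply hne'
          simp [Pi.add_apply, hcc, eOne, hi1]
        exact hmemB₂ i (hsupp _ _ hc0).1
    · by_cases hj1 : j = 1
      · subst hj1
        rw [h1col] at hne'
        have hi1 : i = 1 := by
          by_contra hi1
          exact hne' (by simp [eOne, hi1])
        rw [hi1, hB₂]
        exact ⟨Finset.mem_insert_self _ _, h1E₂⟩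
      · rw [hcolj j hj0 hj1] at hne'
        have hj1E : j - 1 ∈ E := (hsupp _ _ hne').2
        refine ⟨hmemB₂ i (hsupp _ _ hne').1, ?_⟩
        rw [hE₂]
        exact Finset.mem_insert_of_mem (Finset.mem_image.2 ⟨j - 1, hj1E, by omega⟩)
  -- frame facts
  have h1B : (1 : ℕ) ∉ π ⁻¹' (↑B : Set ℕ) := by
    intro hmem
    rw [Set.mem_preimage, hπ1] at hmem
    exact hsB hmem
  have hBcoe : (↑(B.image ⇑π) : Set ℕ) = π ⁻¹' ↑B := by
    rw [Finset.coe_image, Equiv.image_eq_preimage_symm, hπ, Equiv.symm_swap]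
  have hframe₂ : ∀ e ∈ E, e ≠ 0 →
      IsFrameColOn (⊥ : Subgroup (ZMod 2)ˣ) (π ⁻¹' ↑B) (c e) :=
    fun e he hne => isFrameColOn_comp_equiv π (hframe e he hne)
  have hunit1 : IsUnitColOn (insert 1 (π ⁻¹' (↑B : Set ℕ))) (eOne (ZMod 2)) := by
    refine ⟨1, Set.mem_insert _ _, by simp [eOne], fun b' hb' hne => by simp [eOne, hne]⟩
  -- decompose E₂ columns
  have hcolcase : ∀ j ∈ E₂, j ≠ 0 → j = 1 ∨ (2 ≤ j ∧ j - 1 ∈ E ∧ j - 1 ≠ 0) := by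
    intro j hj hj0
    rw [hE₂, Finset.mem_insert] at hj
    rcases hj with h | h
    · exact absurd h hj0
    · rw [Finset.mem_image] at h
      obtain ⟨e, he, rfl⟩ := h
      by_cases he0 : e = 0
      · left; omega
      · right; exact ⟨by omega, by simpa using he, by omega⟩
  constructor
  -- PhiC
  · refine VConforms.wConforms ⟨B₂, E₂, ∅, A₂, A₂, N₂, N₁, ?_, ?_, hcolm₂, ?_, ?_⟩
    · refine ⟨Finset.empty_subset _, ?_, Finset.empty_subset _,
        Finset.disjoint_empty_left _, hsupp₂, ?_, ?_, ?_, ?_, ?_, ?_⟩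
      · rw [show PhiC.CY = ({0} : Finset ℕ) from phiC_CY]
        simpa using h0E₂
      · intro i hi; exact absurd hi (Finset.notMem_empty i)
      · intro i hi; exact absurd hi (Finset.notMem_empty i)
      · intro j hj; exact absurd hj (Finset.notMem_empty j)
      · -- frame columns
        intro j hjE hjCY hjZ
        rw [show PhiC.CY = ({0} : Finset ℕ) from phiC_CY, Finset.mem_singleton] at hjCY
        have hset : (↑B₂ : Set ℕ) \ ↑PhiC.X = insert 1 (π ⁻¹' ↑B) := by
          rw [show PhiC.X = (∅ : Finset ℕ) from rfl, Finset.coe_empty, Set.diff_empty,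
            hB₂, Finset.coe_insert, hBcoe]
        rw [hset]
        rcases hcolcase j hjE hjCY with rfl | ⟨h2j, hjE', hj0'⟩
        · show IsFrameColOn _ _ (fun i => A₂ i 1)
          refine Or.inr (Or.inl ?_)
          have heq : (fun i => A₂ i 1) = eOne (ZMod 2) := by
            funext i
            show col₂ 1 i = eOne (ZMod 2) i
            rw [h1col]
          rw [heq]
          exact hunit1
        · have hcj : (fun i => A₂ i j) = c (j - 1) := by
            funext i
            show col₂ j i = c (j - 1) i
            rw [hcolj j (by omega) (by omega)]
          rw [hcj]
          exact isFrameColOn_insert (hframe₂ _ hjE' hj0') (hvan _)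
      · intro j _ _ _
        rw [show PhiC.X = (∅ : Finset ℕ) from rfl, maskOn_empty]
        exact zero_mem _
      · intro i _ _
        rw [show PhiC.CY = ({0} : Finset ℕ) from phiC_CY]
        exact maskOn_mem_fullOn _ _
    · exact ⟨fun j _ i => rfl, fun j hj => absurd hj (Finset.notMem_empty j)⟩
    · rw [show ((PhiC.C : Finset ℕ) : Set ℕ) = {0} by simp [PhiC]]
      exact hcontr
    · rw [show ((PhiC.Y1 : Finset ℕ) : Set ℕ) = ∅ by simp [PhiC], Set.diff_empty,
        Matroid.restrict_ground_eq_self]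
      exact hmiso
  -- PhiCX
  · refine VConforms.wConforms ⟨B₂, E₂, ∅, A₂, A₂, N₂, N₁, ?_, ?_, hcolm₂, ?_, ?_⟩
    · refine ⟨?_, ?_, Finset.empty_subset _,
        Finset.disjoint_empty_left _, hsupp₂, ?_, ?_, ?_, ?_, ?_, ?_⟩
      · rw [show PhiCX.X = ({1} : Finset ℕ) from rfl, hB₂]
        simp
      · rw [show PhiCX.CY = ({0} : Finset ℕ) from phiCX_CY]
        simpa using h0E₂
      · -- A1 agreement
        intro i hi j hj
        rw [show PhiCX.X = ({1} : Finset ℕ) from rfl, Finset.mem_singleton] at hi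
        rw [show PhiCX.CY = ({0} : Finset ℕ) from phiCX_CY, Finset.mem_singleton] at hj
        subst hi; subst hj
        show col₂ 0 1 = PhiCX.A1 1 0
        rw [h0col]
        show c 0 1 + eOne (ZMod 2) 1 = PhiCX.A1 1 0
        rw [hvan 0]
        simp [eOne, PhiCX]
      · intro i _ j hj; exact absurd hj (Finset.notMem_empty j)
      · intro j hj; exact absurd hj (Finset.notMem_empty j)
      · -- frame columns
        intro j hjE hjCY hjZ
        rw [show PhiCX.CY = ({0} : Finset ℕ) from phiCX_CY, Finset.mem_singleton] at hjCY
        have hset : (↑B₂ : Set ℕ) \ ↑PhiCX.X = π ⁻¹' ↑B := by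
          rw [show PhiCX.X = ({1} : Finset ℕ) from rfl, Finset.coe_singleton, hB₂,
            Finset.coe_insert, hBcoe, Set.insert_diff_self_of_notMem h1B]
        rw [hset]
        rcases hcolcase j hjE hjCY with rfl | ⟨h2j, hjE', hj0'⟩
        · refine Or.inl ?_
          intro b hb
          have hb1 : b ≠ 1 := fun hb1 => h1B (hb1 ▸ hb)
          show col₂ 1 b = 0
          rw [h1col]
          simp [eOne, hb1]
        · have hcj : (fun i => A₂ i j) = c (j - 1) := by
            funext i
            show col₂ j i = c (j - 1) i
            rw [hcolj j (by omega) (by omega)]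
          rw [hcj]
          exact hframe₂ _ hjE' hj0'
      · intro j _ _ _
        rw [show PhiCX.X = ({1} : Finset ℕ) from rfl]
        exact maskOn_mem_fullOn _ _
      · intro i _ _
        rw [show PhiCX.CY = ({0} : Finset ℕ) from phiCX_CY]
        exact maskOn_mem_fullOn _ _
    · exact ⟨fun j _ i => rfl, fun j hj => absurd hj (Finset.notMem_empty j)⟩
    · rw [show ((PhiCX.C : Finset ℕ) : Set ℕ) = {0} by simp [PhiCX]]
      exact hcontr
    · rw [show ((PhiCX.Y1 : Finset ℕ) : Set ℕ) = ∅ by simp [PhiCX], Set.diff_empty,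
        Matroid.restrict_ground_eq_self]
      exact hmiso

end AuxY0Main


section AuxY1Main

open Set

lemma wconforms_phiX_of_conforms_phiY1 {α : Type*} {M : Matroid α} (h : Conforms M PhiY1) :
    WConforms M PhiX := by
  classical
  obtain ⟨B, E, Z, A', A, N, N1, hresp, hbuilt, hcolm, hcontr, hiso⟩ := h
  obtain ⟨h1, h2, h3, h4, h5, h6, h7, h8, h9, h10, h11⟩ := hresp
  obtain ⟨hNE, hNind⟩ := hcolm
  obtain ⟨hb1, hb2⟩ := hbuilt
  have h0X : (0 : ℕ) ∈ PhiY1.X := by decide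
  have h1X : (1 : ℕ) ∈ PhiY1.X := by decide
  have h0B : (0 : ℕ) ∈ B := h1 h0X
  have h1B : (1 : ℕ) ∈ B := h1 h1X
  have hXcoe : ((PhiY1.X : Finset ℕ) : Set ℕ) = {0, 1} := by
    show ((({0, 1} : Finset ℕ)) : Set ℕ) = {0, 1}
    simp
  have hY1 : PhiY1.Y1 = ({2, 3, 4} : Finset ℕ) := rfl
  -- N1 = N
  have hN1 : N1 = N := by
    refine IsContraction.eq_of_empty ?_
    have hC : ((PhiY1.C : Finset ℕ) : Set ℕ) = ∅ := by simp [PhiY1]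
    rwa [hC] at hcontr
  -- extraction from Λ = ⊥ and Δ = ⊥
  have hX0 : ∀ j ∈ E, j ∉ PhiY1.CY → j ∉ Z → ∀ i ∈ PhiY1.X, A' i j = 0 := by
    intro j hj hjCY hjZ i hi
    have hmem := h10 j hj hjCY hjZ
    have hzero : maskOn PhiY1.X (fun i => A' i j) = 0 := by
      rwa [show PhiY1.Λ = (⊥ : AddSubgroup (ℕ → ZMod 2)) from rfl, AddSubgroup.mem_bot] at hmem
    have := congrFun hzero i
    rwa [maskOn, if_pos hi] at this
  have hrow0 : ∀ i ∈ B, i ∉ PhiY1.X → ∀ y ∈ PhiY1.CY, A' i y = 0 := by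
    intro i hi hiX y hy
    have hmem := h11 i hi hiX
    have hzero : maskOn PhiY1.CY (fun j => A' i j) = 0 := by
      rwa [show PhiY1.Δ = (⊥ : AddSubgroup (ℕ → ZMod 2)) from rfl, AddSubgroup.mem_bot] at hmem
    have := congrFun hzero y
    rwa [maskOn, if_pos hy] at this
  -- support of A
  have hsuppA : ∀ i j, A i j ≠ 0 → i ∈ B ∧ j ∈ E := by
    intro i j hne
    by_cases hjZ : j ∈ Z
    · obtain ⟨y, hy, hAy⟩ := hb2 j hjZ
      rw [hAy i] at hne
      by_cases h1' : A' i j = 0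
      · rw [h1', zero_add] at hne
        exact ⟨(h5 _ _ hne).1, h3 hjZ⟩
      · exact ⟨(h5 _ _ h1').1, h3 hjZ⟩
    · rw [hb1 j hjZ i] at hne
      exact h5 _ _ hne
  -- the frame property of the columns of A on B \ {1}
  have hall : ∀ x : ZMod 2, x = 0 ∨ x = 1 := by decide
  have hframeA : ∀ j ∈ E, j ∉ PhiY1.CY →
      IsFrameColOn (⊥ : Subgroup (ZMod 2)ˣ) ((↑B : Set ℕ) \ {1}) (fun i => A i j) := by
    intro j hjE hjCY
    by_cases hjZ : j ∈ Z
    · -- Z columns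
      obtain ⟨y, hy, hAy⟩ := hb2 j hjZ
      have hyCY : y ∈ PhiY1.CY := by rw [phiY1_CY, ← hY1]; exact hy
      obtain ⟨b₀, hb₀S, hb₀1, hb₀0⟩ := h8 j hjZ
      have hb₀B : b₀ ∈ (↑B : Set ℕ) := hb₀S.1
      have hb₀X : b₀ ∉ ({0, 1} : Set ℕ) := by
        rw [← hXcoe]; exact hb₀S.2
      have hb₀0' : b₀ ≠ 0 := fun hc => hb₀X (by simp [hc])
      have hb₀1' : b₀ ≠ 1 := fun hc => hb₀X (by simp [hc])
      have hb₀X' : b₀ ∉ PhiY1.X := fun hc => hb₀S.2 (Finset.mem_coe.2 hc)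
      have hbz : ∀ b' ∈ (↑B : Set ℕ) \ ↑PhiY1.X, b' ≠ b₀ → A' b' j = 0 := hb₀0
      have hb1' : A' b₀ j = 1 := hb₀1
      have hval : ∀ b ∈ (↑B : Set ℕ) \ {1}, b ≠ 0 → b ≠ b₀ → A b j = 0 := by
        intro b hb hb0 hbb
        have hbX : b ∉ PhiY1.X := by
          intro hc
          have hmem : b ∈ ((PhiY1.X : Finset ℕ) : Set ℕ) := Finset.mem_coe.2 hc
          rw [hXcoe] at hmem
          rcases hmem with hc' | hc'
          · exact hb0 hc'
          · exact hb.2 hc'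
        have hbBX : b ∈ (↑B : Set ℕ) \ ↑PhiY1.X :=
          ⟨hb.1, fun hc => hbX (Finset.mem_coe.1 hc)⟩
        rw [hAy b, hbz b hbBX hbb, hrow0 b (Finset.mem_coe.1 hb.1) hbX y hyCY, add_zero]
      have hvb₀ : A b₀ j = 1 := by
        rw [hAy b₀, hb1', hrow0 b₀ (Finset.mem_coe.1 hb₀B) hb₀X' y hyCY, add_zero]
      have h0j : A 0 j = A' 0 y := by
        rw [hAy 0, h7 0 h0X j hjZ, zero_add]
      rcases hall (A' 0 y) with hp | hp
      · -- unit column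
        refine Or.inr (Or.inl ⟨b₀, ⟨hb₀B, by simpa using hb₀1'⟩, hvb₀, ?_⟩)
        intro b' hb' hbne
        show A b' j = 0
        by_cases hb'0 : b' = 0
        · rw [hb'0, h0j, hp]
        · exact hval b' hb' hb'0 hbne
      · -- two entries
        refine Or.inr (Or.inr ⟨b₀, ⟨hb₀B, by simpa using hb₀1'⟩, 0,
          ⟨Finset.mem_coe.2 h0B, by simp⟩, hb₀0', hvb₀,
          ⟨1, Subgroup.mem_bot.2 rfl, ?_⟩, ?_⟩)
        · show A 0 j = _
          rw [h0j, hp]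
          decide
        · intro b hb hbne1 hbne2
          show A b j = 0
          exact hval b hb hbne2 hbne1
    · -- non Z columns
      have hAA' : (fun i => A i j) = fun i => A' i j := funext fun i => hb1 j hjZ i
      rw [hAA']
      have hfr := h9 j hjE hjCY hjZ
      rw [hXcoe] at hfr
      have hins : (↑B : Set ℕ) \ {1} = insert 0 ((↑B : Set ℕ) \ {0, 1}) := by
        ext x
        simp only [Set.mem_diff, Set.mem_insert_iff, Set.mem_singleton_iff]
        constructor
        · rintro ⟨hxB, hx1⟩
          by_cases hx0 : x = 0
          · exact Or.inl hx0
          · exact Or.inr ⟨hxB, by tauto⟩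
        · rintro (rfl | ⟨hxB, hx'⟩)
          · exact ⟨Finset.mem_coe.2 h0B, by omega⟩
          · exact ⟨hxB, by tauto⟩
      rw [hins]
      exact isFrameColOn_insert hfr (hX0 j hjE hjCY hjZ 0 h0X)
  -- construction
  set ρ : Equiv ℕ ℕ := Equiv.swap 0 1 with hρ
  have hρρ : ∀ i, ρ (ρ i) = i := fun i => Equiv.swap_apply_self 0 1 i
  set E₃ : Finset ℕ := E \ ({2, 3, 4} : Finset ℕ) with hE₃
  set A₃ : ℕ → ℕ → ZMod 2 := fun i j => if j ∈ E₃ then A (ρ i) j else 0 with hA₃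
  set B₃ : Finset ℕ := B.image ρ with hB₃
  set N₃ : Matroid ℕ := N ↾ ↑E₃ with hN₃
  have hE₃E : E₃ ⊆ E := Finset.sdiff_subset
  have hcols : ∀ (I : Set ℕ), I ⊆ ↑E₃ →
      (fun e : I => fun i => A₃ i (e : ℕ)) = (fun e : I => (fun i => A i (e : ℕ)) ∘ ρ) := by
    intro I hIsub
    funext e
    funext i
    show (if (e : ℕ) ∈ E₃ then A (ρ i) (e : ℕ) else 0) = A (ρ i) (e : ℕ)
    rw [if_pos (Finset.mem_coe.1 (hIsub e.2))]
  have hcolm₃ : IsColMatroidOf N₃ E₃ A₃ := by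
    refine ⟨rfl, fun I => ?_⟩
    rw [hN₃, Matroid.restrict_indep_iff, hNind I]
    constructor
    · rintro ⟨⟨hIE, hlin⟩, hIE₃⟩
      refine ⟨hIE₃, ?_⟩
      rw [hcols I hIE₃]
      exact (lin_comp_pi ρ _).2 hlin
    · rintro ⟨hIE₃, hlin⟩
      rw [hcols I hIE₃] at hlin
      refine ⟨⟨fun x hx => ?_, (lin_comp_pi ρ _).1 hlin⟩, hIE₃⟩
      exact Finset.coe_subset.2 hE₃E (hIE₃ hx)
  -- VRespects
  refine VConforms.wConforms ⟨B₃, E₃, ∅, A₃, A₃, N₃, N₃, ?_, ?_, hcolm₃, ?_, ?_⟩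
  · refine ⟨?_, ?_, Finset.empty_subset _, Finset.disjoint_empty_left _, ?_, ?_, ?_, ?_,
      ?_, ?_, ?_⟩
    · -- X = {0} ⊆ B₃
      rw [show PhiX.X = ({0} : Finset ℕ) from rfl, hB₃]
      have : (0 : ℕ) = ρ 1 := by rw [hρ, Equiv.swap_apply_right]
      simpa using ⟨1, h1B, this.symm⟩
    · rw [show PhiX.CY = (∅ : Finset ℕ) from phiX_CY]
      exact Finset.empty_subset _
    · -- support
      intro i j hne
      have hjE₃ : j ∈ E₃ := by
        by_contra hc
        exact hne (by rw [hA₃]; exact if_neg hc)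
      have hAne : A (ρ i) j ≠ 0 := by
        intro hc
        exact hne (by rw [hA₃]; simp only [if_pos hjE₃]; exact hc)
      refine ⟨?_, hjE₃⟩
      rw [hB₃, Finset.mem_image]
      exact ⟨ρ i, (hsuppA _ _ hAne).1, hρρ i⟩
    · intro i _ j hj
      rw [show PhiX.CY = (∅ : Finset ℕ) from phiX_CY] at hj
      exact absurd hj (Finset.notMem_empty j)
    · intro i _ j hj
      exact absurd hj (Finset.notMem_empty j)
    · intro j hj
      exact absurd hj (Finset.notMem_empty j)
    · -- frame columns
      intro j hjE₃ _ _
      have hjE : j ∈ E := hE₃E hjE₃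
      have hjCY : j ∉ PhiY1.CY := by
        rw [hE₃] at hjE₃
        exact (Finset.mem_sdiff.1 hjE₃).2
      have hset : (↑B₃ : Set ℕ) \ ↑PhiX.X = ρ ⁻¹' ((↑B : Set ℕ) \ {1}) := by
        rw [show PhiX.X = ({0} : Finset ℕ) from rfl, Finset.coe_singleton, hB₃,
          Finset.coe_image, Set.preimage_diff]
        congr 1
        · rw [Equiv.image_eq_preimage_symm, hρ, Equiv.symm_swap]
        · ext x
          simp only [Set.mem_preimage, Set.mem_singleton_iff, hρ, Equiv.swap_apply_def]
          by_cases h0 : x = 0 <;> by_cases h1 : x = 1 <;> simp [h0, h1]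
      rw [hset]
      have hcolj : (fun i => A₃ i j) = (fun i => A i j) ∘ ρ := by
        funext i
        show (if j ∈ E₃ then A (ρ i) j else 0) = A (ρ i) j
        rw [if_pos hjE₃]
      rw [hcolj]
      exact isFrameColOn_comp_equiv ρ (hframeA j hjE hjCY)
    · intro j _ _ _
      rw [show PhiX.X = ({0} : Finset ℕ) from rfl]
      exact maskOn_mem_fullOn _ _
    · intro i _ _
      rw [show PhiX.CY = (∅ : Finset ℕ) from phiX_CY, maskOn_empty]
      exact zero_mem _
  · exact ⟨fun j _ i => rfl, fun j hj => absurd hj (Finset.notMem_empty j)⟩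
  · rw [show ((PhiX.C : Finset ℕ) : Set ℕ) = ∅ by simp [PhiX]]
    exact isContraction_self_empty N₃
  · rw [show ((PhiX.Y1 : Finset ℕ) : Set ℕ) = ∅ by simp [PhiX], Set.diff_empty]
    rw [show N₃ ↾ N₃.E = N₃ from Matroid.restrict_ground_eq_self N₃]
    have hEq : N1 ↾ (N1.E \ ↑PhiY1.Y1) = N₃ := by
      rw [hN1, hNE, hY1, ← Finset.coe_sdiff, hN₃, hE₃]
    rwa [hEq] at hiso

end AuxY1Main

/-- If a set of binary frame templates describing a minor-closed class `𝓜`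
of binary matroids contains a nontrivial template, then `𝓜` contains `𝓜(Φ_{Y₀})`,
`𝓜(Φ_{Y₁})`, `𝓜✶(Φ_{Y₀})`, or `𝓜✶(Φ_{Y₁})`. -/
theorem class_contains_phiY0_or_phiY1 (𝓜 : Set (Matroid ℕ))
    (Φs Ψs : List (FrameTemplate (ZMod 2))) (hmc : MinorClosed 𝓜)
    (hbin : ∀ M ∈ 𝓜, M.E.Finite ∧ IsBinary M)
    (hT : ∀ Φ ∈ Φs ++ Ψs, IsBinaryT Φ)
    (hdesc : Describes 𝓜 Φs Ψs)
    (hnt : ∃ Φ ∈ Φs ++ Ψs, ¬ IsTrivialT Φ) :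
    (∀ M : Matroid ℕ, Conforms M PhiY0 → M ∈ 𝓜) ∨
    (∀ M : Matroid ℕ, Conforms M PhiY1 → M ∈ 𝓜) ∨
    (∀ M : Matroid ℕ, Conforms M PhiY0 → M✶ ∈ 𝓜) ∨
    (∀ M : Matroid ℕ, Conforms M PhiY1 → M✶ ∈ 𝓜) := by
  obtain ⟨Φ, hΦmem, hΦnt⟩ := hnt
  obtain ⟨k, l, m, -, -, -, hΦs, hΨs, -, hfive⟩ := hdesc
  rcases hfive Φ hΦmem with htriv | ⟨Φ', hΦ'mem, hpre⟩
  · exact absurd htriv hΦnt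
  have hkey : (∀ M : Matroid ℕ, Conforms M PhiY0 → WConforms M Φ') ∨
      (∀ M : Matroid ℕ, Conforms M PhiY1 → WConforms M Φ') := by
    simp only [List.mem_cons, List.not_mem_nil, or_false] at hΦ'mem
    rcases hΦ'mem with rfl | rfl | rfl | rfl | rfl
    · exact Or.inr (fun M h => wconforms_phiX_of_conforms_phiY1 h)
    · exact Or.inl (fun M h => (wconforms_of_conforms_phiY0 h).1)
    · exact Or.inl (fun M h => (wconforms_of_conforms_phiY0 h).2)
    · exact Or.inl (fun M h => VConforms.wConforms (Conforms.vConforms h))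
    · exact Or.inr (fun M h => VConforms.wConforms (Conforms.vConforms h))
  rcases List.mem_append.1 hΦmem with hin | hin
  · rcases hkey with hk | hk
    · exact Or.inl (fun M hc => hΦs Φ hin M (hpre ℕ M (hk M hc)))
    · exact Or.inr (Or.inl (fun M hc => hΦs Φ hin M (hpre ℕ M (hk M hc))))
  · rcases hkey with hk | hk
    · exact Or.inr (Or.inr (Or.inl (fun M hc => hΨs Φ hin M (hpre ℕ M (hk M hc)))))
    · exact Or.inr (Or.inr (Or.inr (fun M hc => hΨs Φ hin M (hpre ℕ M (hk M hc)))))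

end TemplatePaper
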